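/- For n > 1, every automorphism of an HCS(4n+1) obtained from the doubling construction fixes the vertex ∞. -/

import Mathlib

open Pointwise

variable {V : Type*}

/-- The action of a permutation on a simple graph by relabelling vertices. -/
instance permGraphAction : MulAction (Equiv.Perm V) (SimpleGraph V) where
  smul σ H := H.map σ.toEmbedding
  one_smul H := by
    show H.map (1 : Equiv.Perm V).toEmbedding = H
    ext a b
    simp [SimpleGraph.map_adj]
  mul_smul σ τ H := by
    ext a b
    show (H.map (σ * τ).toEmbedding).Adj a b ↔ ((H.map τ.toEmbedding).map σ.toEmbedding).Adj a b
    simp only [SimpleGraph.map_adj', Equiv.coe_toEmbedding, Equiv.Perm.coe_mul,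
      Function.comp_apply]
    constructor
    · rintro ⟨hab, u, v, h, rfl, rfl⟩
      exact ⟨hab, τ u, τ v, ⟨fun e => h.ne (τ.injective e), u, v, h, rfl, rfl⟩, rfl, rfl⟩
    · rintro ⟨hab, -, -, ⟨-, u, v, h, rfl, rfl⟩, rfl, rfl⟩
      exact ⟨hab, u, v, h, rfl, rfl⟩

lemma perm_smul_graph (σ : Equiv.Perm V) (H : SimpleGraph V) :
    σ • H = H.map σ.toEmbedding := rfl

/-- A Hamiltonian cycle of the complete graph on `V`: a connected, 2-regular
(spanning) subgraph. -/
def IsHamCycle [Fintype V] (H : SimpleGraph V) : Prop :=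
  H.Connected ∧ ∀ v : V, (H.neighborSet v).ncard = 2

/-- A Hamiltonian cycle system: a set of Hamiltonian cycles whose edge sets
partition the edge set of the complete graph. -/
def IsHCS [Fintype V] (𝓗 : Set (SimpleGraph V)) : Prop :=
  (∀ H ∈ 𝓗, IsHamCycle H) ∧
    ∀ e ∈ (⊤ : SimpleGraph V).edgeSet, ∃! H, H ∈ 𝓗 ∧ e ∈ H.edgeSet

/-- The full automorphism group of a Hamiltonian cycle system, as the subgroup
of vertex permutations preserving the set of cycles. -/
def autHCS (𝓗 : Set (SimpleGraph V)) : Subgroup (Equiv.Perm V) :=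
  MulAction.stabilizer (Equiv.Perm V) 𝓗

/-- The cycle graph traced by a map from `ZMod m` (consecutive residues are adjacent). -/
def cycleOn {W : Type*} (m : ℕ) (f : ZMod m → W) : SimpleGraph W :=
  SimpleGraph.fromRel (fun a b => ∃ i : ZMod m, f i = a ∧ f (i + 1) = b)

/-- First-type cycle of the doubling construction, as a map `ZMod (4n+1) → {∞} ∪ ([2n]×{±1})`
(`none` is `∞`, `true` is sign `+1`). -/
def doubleT1 (n : ℕ) (A B : ZMod (2*n+1) → Option (Fin (2*n)))
    (k : ZMod (4*n+1)) : Option (Fin (2*n) × Bool) :=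
  if k.val = 0 then none
  else if k.val ≤ 2*n then (A ((k.val : ℕ) : ZMod (2*n+1))).map (fun x => (x, true))
  else (B (((4*n+1-k.val : ℕ)) : ZMod (2*n+1))).map (fun x => (x, false))

/-- Second-type cycle of the doubling construction. -/
def doubleT2 (n : ℕ) (C : ZMod (2*n+1) → Option (Fin (2*n)))
    (k : ZMod (4*n+1)) : Option (Fin (2*n) × Bool) :=
  if k.val = 0 then none
  else if k.val ≤ 2*n then
    (C (((2*n+1-k.val : ℕ)) : ZMod (2*n+1))).map (fun x => (x, decide (k.val % 2 = 1)))
  else (C (((k.val - 2*n : ℕ)) : ZMod (2*n+1))).map (fun x => (x, decide ((k.val - 2*n) % 2 = 1)))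

namespace DblAux

variable {W : Type*}

lemma castInjZ {m j k : ℕ} [NeZero m] (hj : j < m) (hk : k < m)
    (h : (j : ZMod m) = (k : ZMod m)) : j = k := by
  rw [← ZMod.val_cast_of_lt hj, ← ZMod.val_cast_of_lt hk, h]

lemma castNeZero {m j : ℕ} [NeZero m] (h1 : j ≠ 0) (h2 : j < m) :
    ((j : ℕ) : ZMod m) ≠ 0 := by
  intro h
  exact h1 (castInjZ h2 (Nat.pos_of_ne_zero (NeZero.ne m)) (by simpa using h))

lemma bij_some {n : ℕ} {F : ZMod (2*n+1) → Option (Fin (2*n))} (hF : Function.Injective F)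
    (h0 : F 0 = none) {z : ZMod (2*n+1)} (hz : z ≠ 0) : ∃ c, F z = some c := by
  cases hFz : F z with
  | none => exact absurd (hF (hFz.trans h0.symm)) hz
  | some c => exact ⟨c, rfl⟩

section Values

variable (n : ℕ) (A B C : ZMod (2*n+1) → Option (Fin (2*n)))

lemma d1_zero : doubleT1 n A B 0 = none := by
  haveI : NeZero (4*n+1) := ⟨by omega⟩
  unfold doubleT1
  rw [if_pos ZMod.val_zero]

lemma d2_zero : doubleT2 n C 0 = none := by
  haveI : NeZero (4*n+1) := ⟨by omega⟩
  unfold doubleT2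
  rw [if_pos ZMod.val_zero]

lemma d1_lo (j : ℕ) (h1 : 1 ≤ j) (h2 : j ≤ 2*n) :
    doubleT1 n A B ((j : ℕ) : ZMod (4*n+1)) =
      (A ((j : ℕ) : ZMod (2*n+1))).map (fun x => (x, true)) := by
  haveI : NeZero (4*n+1) := ⟨by omega⟩
  unfold doubleT1
  rw [ZMod.val_cast_of_lt (by omega)]
  rw [if_neg (by omega), if_pos h2]

lemma d1_hi (j : ℕ) (h1 : 2*n+1 ≤ j) (h2 : j ≤ 4*n) :
    doubleT1 n A B ((j : ℕ) : ZMod (4*n+1)) =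
      (B (((4*n+1-j : ℕ)) : ZMod (2*n+1))).map (fun x => (x, false)) := by
  haveI : NeZero (4*n+1) := ⟨by omega⟩
  unfold doubleT1
  rw [ZMod.val_cast_of_lt (by omega)]
  rw [if_neg (by omega), if_neg (by omega)]

lemma d2_lo (j : ℕ) (h1 : 1 ≤ j) (h2 : j ≤ 2*n) :
    doubleT2 n C ((j : ℕ) : ZMod (4*n+1)) =
      (C (((2*n+1-j : ℕ)) : ZMod (2*n+1))).map (fun x => (x, decide (j % 2 = 1))) := by
  haveI : NeZero (4*n+1) := ⟨by omega⟩
  unfold doubleT2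
  rw [ZMod.val_cast_of_lt (by omega)]
  rw [if_neg (by omega), if_pos h2]

lemma d2_hi (j : ℕ) (h1 : 2*n+1 ≤ j) (h2 : j ≤ 4*n) :
    doubleT2 n C ((j : ℕ) : ZMod (4*n+1)) =
      (C (((j - 2*n : ℕ)) : ZMod (2*n+1))).map (fun x => (x, decide ((j - 2*n) % 2 = 1))) := by
  haveI : NeZero (4*n+1) := ⟨by omega⟩
  unfold doubleT2
  rw [ZMod.val_cast_of_lt (by omega)]
  rw [if_neg (by omega), if_neg (by omega)]

end Values


section Bij

variable {n : ℕ}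

lemma d1_bij (hn : 1 ≤ n) {A B : ZMod (2*n+1) → Option (Fin (2*n))}
    (hA : Function.Bijective A) (hB : Function.Bijective B)
    (hA0 : A 0 = none) (hB0 : B 0 = none) : Function.Bijective (doubleT1 n A B) := by
  haveI : NeZero (4*n+1) := ⟨by omega⟩
  haveI : NeZero (2*n+1) := ⟨by omega⟩
  rw [Fintype.bijective_iff_injective_and_card]
  refine ⟨?_, by simp; omega⟩
  intro k l h
  have hkv := ZMod.val_lt k
  have hlv := ZMod.val_lt l
  have hkc : ((k.val : ℕ) : ZMod (4*n+1)) = k := ZMod.natCast_rightInverse k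
  have hlc : ((l.val : ℕ) : ZMod (4*n+1)) = l := ZMod.natCast_rightInverse l
  rw [← hkc, ← hlc] at h ⊢
  suffices hs : k.val = l.val by rw [hs]
  rcases (by omega : k.val = 0 ∨ (1 ≤ k.val ∧ k.val ≤ 2*n) ∨ (2*n+1 ≤ k.val ∧ k.val ≤ 4*n))
    with hk0 | hklo | hkhi <;>
  rcases (by omega : l.val = 0 ∨ (1 ≤ l.val ∧ l.val ≤ 2*n) ∨ (2*n+1 ≤ l.val ∧ l.val ≤ 4*n))
    with hl0 | hllo | hlhi
  · omega
  · rw [hk0, Nat.cast_zero, d1_zero, d1_lo n A B l.val hllo.1 hllo.2] at h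
    obtain ⟨b, hb⟩ := bij_some hA.1 hA0 (castNeZero (m := 2*n+1) (j := l.val) (by omega) (by omega))
    rw [hb] at h; simp at h
  · rw [hk0, Nat.cast_zero, d1_zero, d1_hi n A B l.val hlhi.1 hlhi.2] at h
    obtain ⟨b, hb⟩ := bij_some hB.1 hB0 (castNeZero (m := 2*n+1) (j := 4*n+1-l.val) (by omega) (by omega))
    rw [hb] at h; simp at h
  · rw [hl0, Nat.cast_zero, d1_zero, d1_lo n A B k.val hklo.1 hklo.2] at h
    obtain ⟨b, hb⟩ := bij_some hA.1 hA0 (castNeZero (m := 2*n+1) (j := k.val) (by omega) (by omega))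
    rw [hb] at h; simp at h
  · rw [d1_lo n A B k.val hklo.1 hklo.2, d1_lo n A B l.val hllo.1 hllo.2] at h
    obtain ⟨a, ha⟩ := bij_some hA.1 hA0 (castNeZero (m := 2*n+1) (j := k.val) (by omega) (by omega))
    obtain ⟨b, hb⟩ := bij_some hA.1 hA0 (castNeZero (m := 2*n+1) (j := l.val) (by omega) (by omega))
    rw [ha, hb] at h
    simp at h
    exact castInjZ (m := 2*n+1) (j := k.val) (k := l.val) (by omega) (by omega)
      (hA.1 (by rw [ha, hb, h]))
  · rw [d1_lo n A B k.val hklo.1 hklo.2, d1_hi n A B l.val hlhi.1 hlhi.2] at h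
    obtain ⟨a, ha⟩ := bij_some hA.1 hA0 (castNeZero (m := 2*n+1) (j := k.val) (by omega) (by omega))
    obtain ⟨b, hb⟩ := bij_some hB.1 hB0 (castNeZero (m := 2*n+1) (j := 4*n+1-l.val) (by omega) (by omega))
    rw [ha, hb] at h
    simp at h
  · rw [hl0, Nat.cast_zero, d1_zero, d1_hi n A B k.val hkhi.1 hkhi.2] at h
    obtain ⟨b, hb⟩ := bij_some hB.1 hB0 (castNeZero (m := 2*n+1) (j := 4*n+1-k.val) (by omega) (by omega))
    rw [hb] at h; simp at h
  · rw [d1_hi n A B k.val hkhi.1 hkhi.2, d1_lo n A B l.val hllo.1 hllo.2] at h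
    obtain ⟨a, ha⟩ := bij_some hB.1 hB0 (castNeZero (m := 2*n+1) (j := 4*n+1-k.val) (by omega) (by omega))
    obtain ⟨b, hb⟩ := bij_some hA.1 hA0 (castNeZero (m := 2*n+1) (j := l.val) (by omega) (by omega))
    rw [ha, hb] at h
    simp at h
  · rw [d1_hi n A B k.val hkhi.1 hkhi.2, d1_hi n A B l.val hlhi.1 hlhi.2] at h
    obtain ⟨a, ha⟩ := bij_some hB.1 hB0 (castNeZero (m := 2*n+1) (j := 4*n+1-k.val) (by omega) (by omega))
    obtain ⟨b, hb⟩ := bij_some hB.1 hB0 (castNeZero (m := 2*n+1) (j := 4*n+1-l.val) (by omega) (by omega))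
    rw [ha, hb] at h
    simp at h
    have := castInjZ (m := 2*n+1) (j := 4*n+1-k.val) (k := 4*n+1-l.val) (by omega) (by omega)
      (hB.1 (by rw [ha, hb, h]))
    omega

lemma d2_bij (hn : 1 ≤ n) {C : ZMod (2*n+1) → Option (Fin (2*n))}
    (hC : Function.Bijective C) (hC0 : C 0 = none) : Function.Bijective (doubleT2 n C) := by
  haveI : NeZero (4*n+1) := ⟨by omega⟩
  haveI : NeZero (2*n+1) := ⟨by omega⟩
  rw [Fintype.bijective_iff_injective_and_card]
  refine ⟨?_, by simp; omega⟩
  intro k l h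
  have hkv := ZMod.val_lt k
  have hlv := ZMod.val_lt l
  have hkc : ((k.val : ℕ) : ZMod (4*n+1)) = k := ZMod.natCast_rightInverse k
  have hlc : ((l.val : ℕ) : ZMod (4*n+1)) = l := ZMod.natCast_rightInverse l
  rw [← hkc, ← hlc] at h ⊢
  suffices hs : k.val = l.val by rw [hs]
  rcases (by omega : k.val = 0 ∨ (1 ≤ k.val ∧ k.val ≤ 2*n) ∨ (2*n+1 ≤ k.val ∧ k.val ≤ 4*n))
    with hk0 | hklo | hkhi <;>
  rcases (by omega : l.val = 0 ∨ (1 ≤ l.val ∧ l.val ≤ 2*n) ∨ (2*n+1 ≤ l.val ∧ l.val ≤ 4*n))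
    with hl0 | hllo | hlhi
  · omega
  · rw [hk0, Nat.cast_zero, d2_zero, d2_lo n C l.val hllo.1 hllo.2] at h
    obtain ⟨b, hb⟩ := bij_some hC.1 hC0 (castNeZero (m := 2*n+1) (j := 2*n+1-l.val) (by omega) (by omega))
    rw [hb] at h; simp at h
  · rw [hk0, Nat.cast_zero, d2_zero, d2_hi n C l.val hlhi.1 hlhi.2] at h
    obtain ⟨b, hb⟩ := bij_some hC.1 hC0 (castNeZero (m := 2*n+1) (j := l.val-2*n) (by omega) (by omega))
    rw [hb] at h; simp at h
  · rw [hl0, Nat.cast_zero, d2_zero, d2_lo n C k.val hklo.1 hklo.2] at h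
    obtain ⟨b, hb⟩ := bij_some hC.1 hC0 (castNeZero (m := 2*n+1) (j := 2*n+1-k.val) (by omega) (by omega))
    rw [hb] at h; simp at h
  · rw [d2_lo n C k.val hklo.1 hklo.2, d2_lo n C l.val hllo.1 hllo.2] at h
    obtain ⟨a, ha⟩ := bij_some hC.1 hC0 (castNeZero (m := 2*n+1) (j := 2*n+1-k.val) (by omega) (by omega))
    obtain ⟨b, hb⟩ := bij_some hC.1 hC0 (castNeZero (m := 2*n+1) (j := 2*n+1-l.val) (by omega) (by omega))
    rw [ha, hb] at h
    simp at h
    have := castInjZ (m := 2*n+1) (j := 2*n+1-k.val) (k := 2*n+1-l.val) (by omega) (by omega)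
      (hC.1 (by rw [ha, hb, h.1]))
    omega
  · rw [d2_lo n C k.val hklo.1 hklo.2, d2_hi n C l.val hlhi.1 hlhi.2] at h
    obtain ⟨a, ha⟩ := bij_some hC.1 hC0 (castNeZero (m := 2*n+1) (j := 2*n+1-k.val) (by omega) (by omega))
    obtain ⟨b, hb⟩ := bij_some hC.1 hC0 (castNeZero (m := 2*n+1) (j := l.val-2*n) (by omega) (by omega))
    rw [ha, hb] at h
    simp at h
    have h1 := castInjZ (m := 2*n+1) (j := 2*n+1-k.val) (k := l.val-2*n) (by omega) (by omega)
      (hC.1 (by rw [ha, hb, h.1]))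
    have h2 := h.2
    omega
  · rw [hl0, Nat.cast_zero, d2_zero, d2_hi n C k.val hkhi.1 hkhi.2] at h
    obtain ⟨b, hb⟩ := bij_some hC.1 hC0 (castNeZero (m := 2*n+1) (j := k.val-2*n) (by omega) (by omega))
    rw [hb] at h; simp at h
  · rw [d2_hi n C k.val hkhi.1 hkhi.2, d2_lo n C l.val hllo.1 hllo.2] at h
    obtain ⟨a, ha⟩ := bij_some hC.1 hC0 (castNeZero (m := 2*n+1) (j := k.val-2*n) (by omega) (by omega))
    obtain ⟨b, hb⟩ := bij_some hC.1 hC0 (castNeZero (m := 2*n+1) (j := 2*n+1-l.val) (by omega) (by omega))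
    rw [ha, hb] at h
    simp at h
    have h1 := castInjZ (m := 2*n+1) (j := k.val-2*n) (k := 2*n+1-l.val) (by omega) (by omega)
      (hC.1 (by rw [ha, hb, h.1]))
    have h2 := h.2
    omega
  · rw [d2_hi n C k.val hkhi.1 hkhi.2, d2_hi n C l.val hlhi.1 hlhi.2] at h
    obtain ⟨a, ha⟩ := bij_some hC.1 hC0 (castNeZero (m := 2*n+1) (j := k.val-2*n) (by omega) (by omega))
    obtain ⟨b, hb⟩ := bij_some hC.1 hC0 (castNeZero (m := 2*n+1) (j := l.val-2*n) (by omega) (by omega))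
    rw [ha, hb] at h
    simp at h
    have := castInjZ (m := 2*n+1) (j := k.val-2*n) (k := l.val-2*n) (by omega) (by omega)
      (hC.1 (by rw [ha, hb, h.1]))
    omega

end Bij

section Cycle

variable {m : ℕ} {f : ZMod m → W}

lemma cycleOn_adj_iff (hf : Function.Injective f) {i j : ZMod m} :
    (cycleOn m f).Adj (f i) (f j) ↔ i ≠ j ∧ (j = i + 1 ∨ i = j + 1) := by
  constructor
  · rintro ⟨hne, (⟨k, hk1, hk2⟩ | ⟨k, hk1, hk2⟩)⟩
    · exact ⟨fun h => hne (by rw [h]), Or.inl (by rw [← hf hk2, hf hk1])⟩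
    · exact ⟨fun h => hne (by rw [h]), Or.inr (by rw [← hf hk2, hf hk1])⟩
  · rintro ⟨hne, (h | h)⟩
    · exact ⟨fun h' => hne (hf h'), Or.inl ⟨i, rfl, by rw [h]⟩⟩
    · exact ⟨fun h' => hne (hf h'), Or.inr ⟨j, rfl, by rw [h]⟩⟩

lemma cycleOn_adj_of (hf : Function.Injective f) {i j : ZMod m}
    (h : i ≠ j) (hij : j = i + 1 ∨ i = j + 1) : (cycleOn m f).Adj (f i) (f j) :=
  (cycleOn_adj_iff hf).2 ⟨h, hij⟩

lemma cycleOn_adj_right (hf : Function.Bijective f) {i : ZMod m} {x : W}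
    (h : (cycleOn m f).Adj (f i) x) : x = f (i + 1) ∨ x = f (i - 1) := by
  obtain ⟨j, rfl⟩ := hf.2 x
  rcases ((cycleOn_adj_iff hf.1).1 h).2 with h' | h'
  · exact Or.inl (by rw [h'])
  · exact Or.inr (by rw [h', add_sub_cancel_right])

lemma cycleOn_walk_add (hf : Function.Injective f) (h1 : (1 : ZMod m) ≠ 0)
    (ℓ : ℕ) : ∀ (a : ZMod m), ∃ w : (cycleOn m f).Walk (f a) (f (a + ℓ)), w.length = ℓ := by
  induction ℓ with
  | zero => exact fun a => ⟨(SimpleGraph.Walk.nil).copy rfl (by push_cast; ring_nf), by simp⟩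
  | succ ℓ ih =>
    intro a
    obtain ⟨w, hw⟩ := ih (a + 1)
    have hadj : (cycleOn m f).Adj (f a) (f (a + 1)) :=
      cycleOn_adj_of hf (by simp [h1, eq_comm]) (Or.inl rfl)
    refine ⟨(SimpleGraph.Walk.cons hadj w).copy rfl (by push_cast; ring_nf), by simp [hw]⟩

lemma cycleOn_walk_sub (hf : Function.Injective f) (h1 : (1 : ZMod m) ≠ 0)
    (ℓ : ℕ) (a : ZMod m) : ∃ w : (cycleOn m f).Walk (f a) (f (a - ℓ)), w.length = ℓ := by
  obtain ⟨w, hw⟩ := cycleOn_walk_add hf h1 ℓ (a - ℓ)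
  refine ⟨(w.copy rfl (by rw [sub_add_cancel])).reverse, by simpa using hw⟩

lemma cycleOn_walk_diff (hf : Function.Bijective f) {x y : W} (w : (cycleOn m f).Walk x y) :
    ∀ (a b : ZMod m), x = f a → y = f b →
      ∃ s t : ℕ, s + t = w.length ∧ (b - a : ZMod m) = (s : ZMod m) - t := by
  induction w with
  | nil =>
    intro a b ha hb
    refine ⟨0, 0, by simp, ?_⟩
    have : a = b := hf.1 (by rw [← ha, ← hb])
    simp [this]
  | @cons x z y hadj w ih =>
    intro a b ha hb
    subst ha
    rcases cycleOn_adj_right hf hadj with hz | hz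
    · obtain ⟨s, t, hst, hd⟩ := ih (a + 1) b hz hb
      refine ⟨s + 1, t, by simp [SimpleGraph.Walk.length_cons]; omega, ?_⟩
      push_cast
      rw [show b - a = (b - (a+1)) + 1 by ring, hd]; ring
    · obtain ⟨s, t, hst, hd⟩ := ih (a - 1) b hz hb
      refine ⟨s, t + 1, by simp [SimpleGraph.Walk.length_cons]; omega, ?_⟩
      push_cast
      rw [show b - a = (b - (a-1)) - 1 by ring, hd]; ring

end Cycle

section Far

def FarApart (G : SimpleGraph W) (L : ℕ) (a b : W) : Prop :=
  ∀ w : G.Walk a b, L < w.length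

lemma farApart_congr {G : SimpleGraph W} {L : ℕ} {a b a' b' : W}
    (h : FarApart G L a b) (ha : a = a') (hb : b = b') : FarApart G L a' b' := by
  subst ha; subst hb; exact h

lemma cycleOn_far {n : ℕ} (hn : 1 ≤ n) {f : ZMod (4*n+1) → W}
    (hf : Function.Bijective f) {a b : ZMod (4*n+1)} (d : ℕ)
    (hd : b - a = (d : ZMod (4*n+1))) (hd1 : 2*n ≤ d) (hd2 : d ≤ 2*n+1) :
    FarApart (cycleOn (4*n+1) f) (2*n-1) (f a) (f b) := by
  haveI : NeZero (4*n+1) := ⟨by omega⟩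
  intro w
  by_contra hle
  push_neg at hle
  obtain ⟨s, t, hst, hdiff⟩ := cycleOn_walk_diff hf w a b rfl rfl
  rw [hd] at hdiff
  have hcast : ((d + t : ℕ) : ZMod (4*n+1)) = ((s : ℕ) : ZMod (4*n+1)) := by
    push_cast
    rw [hdiff]; ring
  have := castInjZ (m := 4*n+1) (j := d + t) (k := s) (by omega) (by omega) hcast
  omega

end Far

section Special

def SpecialAt (𝓗 : Set (SimpleGraph W)) (L : ℕ) (u : W) : Prop :=
  ∀ K ∈ 𝓗, ∃ K' ∈ 𝓗, ∃ p q : W,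
    K.Adj u p ∧ K.Adj u q ∧ (∀ r, K.Adj u r → r = p ∨ r = q) ∧
    K'.Adj p q ∧ FarApart K' L u p ∧ FarApart K' L u q

lemma pick_two {p' q' a b : W}
    (hne : p' ≠ q') (hp : p' = a ∨ p' = b) (hq : q' = a ∨ q' = b) :
    (p' = a ∧ q' = b) ∨ (p' = b ∧ q' = a) := by
  rcases hp with hp | hp <;> rcases hq with hq | hq
  · exact absurd (hp.trans hq.symm) hne
  · exact Or.inl ⟨hp, hq⟩
  · exact Or.inr ⟨hp, hq⟩
  · exact absurd (hp.trans hq.symm) hne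

lemma castM41 (n : ℕ) : ((4*n : ℕ) : ZMod (4*n+1)) = -1 := by
  haveI : NeZero (4*n+1) := ⟨by omega⟩
  refine eq_neg_of_add_eq_zero_left ?_
  rw [show ((4*n:ℕ) : ZMod (4*n+1)) + 1 = ((4*n+1 : ℕ) : ZMod (4*n+1)) by push_cast; ring,
    ZMod.natCast_self]

lemma castm2n (n : ℕ) : ((2*n : ℕ) : ZMod (2*n+1)) = -1 := by
  haveI : NeZero (2*n+1) := ⟨by omega⟩
  refine eq_neg_of_add_eq_zero_left ?_
  rw [show ((2*n:ℕ) : ZMod (2*n+1)) + 1 = ((2*n+1 : ℕ) : ZMod (2*n+1)) by push_cast; ring,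
    ZMod.natCast_self]

lemma oneM_ne (n : ℕ) (hn : 1 ≤ n) : (1 : ZMod (4*n+1)) ≠ 0 := by
  haveI : NeZero (4*n+1) := ⟨by omega⟩
  have := castNeZero (m := 4*n+1) (j := 1) one_ne_zero (by omega)
  simpa using this

variable {n : ℕ}

lemma q_position (hn : 1 ≤ n) {g' : ZMod (4*n+1) → Option (Fin (2*n) × Bool)}
    (hbij : Function.Bijective g') (hg0 : g' 0 = none) {q : Option (Fin (2*n) × Bool)}
    (hadj : (cycleOn (4*n+1) g').Adj none q) :
    q = g' ((1 : ℕ) : ZMod (4*n+1)) ∨ q = g' ((4*n : ℕ) : ZMod (4*n+1)) := by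
  rw [← hg0] at hadj
  rcases cycleOn_adj_right hbij hadj with h | h
  · left; rw [h]; norm_num
  · right; rw [h, castM41, zero_sub]

lemma pv_bad1 (hn : 1 < n) {g' : ZMod (4*n+1) → Option (Fin (2*n) × Bool)}
    (hbij : Function.Bijective g') (hg0 : g' 0 = none)
    {v q : Option (Fin (2*n) × Bool)}
    (hfn : FarApart (cycleOn (4*n+1) g') (2*n-1) v none)
    (hfq : FarApart (cycleOn (4*n+1) g') (2*n-1) v q)
    (hq : q = g' ((1 : ℕ) : ZMod (4*n+1))) :
    v = g' ((2*n+1 : ℕ) : ZMod (4*n+1)) := by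
  haveI : NeZero (4*n+1) := ⟨by omega⟩
  have h1 := oneM_ne n (by omega)
  obtain ⟨P, hP⟩ := hbij.2 v
  have hPc : ((P.val : ℕ) : ZMod (4*n+1)) = P := ZMod.natCast_rightInverse P
  have hPv := ZMod.val_lt P
  by_cases hP0 : P.val = 0
  · exfalso
    have hv : v = none := by rw [← hP, ← hPc, hP0, Nat.cast_zero, hg0]
    have := hfn (SimpleGraph.Walk.nil.copy hv.symm rfl)
    simp at this
  rcases (by omega : (1 ≤ P.val ∧ P.val ≤ 2*n-1) ∨ P.val = 2*n ∨ P.val = 2*n+1 ∨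
      (2*n+2 ≤ P.val ∧ P.val ≤ 4*n)) with hs | hs | hs | hs
  · exfalso
    obtain ⟨w, hw⟩ := cycleOn_walk_sub hbij.1 h1 P.val P
    have hend : g' (P - (P.val : ℕ)) = none := by rw [hPc, sub_self, hg0]
    have := hfn (w.copy hP hend)
    rw [SimpleGraph.Walk.length_copy, hw] at this
    omega
  · exfalso
    obtain ⟨w, hw⟩ := cycleOn_walk_sub hbij.1 h1 (2*n-1) P
    have hend : g' (P - ((2*n-1 : ℕ) : ZMod (4*n+1))) = q := by
      rw [hq]; congr 1
      rw [← hPc, hs, sub_eq_iff_eq_add, ← Nat.cast_add]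
      congr 1
      omega
    have := hfq (w.copy hP hend)
    rw [SimpleGraph.Walk.length_copy, hw] at this
    omega
  · rw [← hP, ← hPc, hs]
  · exfalso
    obtain ⟨w, hw⟩ := cycleOn_walk_add hbij.1 h1 (4*n+1-P.val) P
    have hend : g' (P + ((4*n+1-P.val : ℕ) : ZMod (4*n+1))) = none := by
      have h2 : ((P.val : ℕ) : ZMod (4*n+1)) + ((4*n+1-P.val : ℕ) : ZMod (4*n+1)) = 0 := by
        rw [← Nat.cast_add, show P.val + (4*n+1-P.val) = 4*n+1 by omega, ZMod.natCast_self]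
      rw [hPc] at h2
      rw [h2, hg0]
    have := hfn (w.copy hP hend)
    rw [SimpleGraph.Walk.length_copy, hw] at this
    omega

lemma pv_bad2 (hn : 1 < n) {g' : ZMod (4*n+1) → Option (Fin (2*n) × Bool)}
    (hbij : Function.Bijective g') (hg0 : g' 0 = none)
    {v q : Option (Fin (2*n) × Bool)}
    (hfn : FarApart (cycleOn (4*n+1) g') (2*n-1) v none)
    (hfq : FarApart (cycleOn (4*n+1) g') (2*n-1) v q)
    (hq : q = g' ((4*n : ℕ) : ZMod (4*n+1))) :
    v = g' ((2*n : ℕ) : ZMod (4*n+1)) := by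
  haveI : NeZero (4*n+1) := ⟨by omega⟩
  have h1 := oneM_ne n (by omega)
  obtain ⟨P, hP⟩ := hbij.2 v
  have hPc : ((P.val : ℕ) : ZMod (4*n+1)) = P := ZMod.natCast_rightInverse P
  have hPv := ZMod.val_lt P
  by_cases hP0 : P.val = 0
  · exfalso
    have hv : v = none := by rw [← hP, ← hPc, hP0, Nat.cast_zero, hg0]
    have := hfn (SimpleGraph.Walk.nil.copy hv.symm rfl)
    simp at this
  rcases (by omega : (1 ≤ P.val ∧ P.val ≤ 2*n-1) ∨ P.val = 2*n ∨ P.val = 2*n+1 ∨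
      (2*n+2 ≤ P.val ∧ P.val ≤ 4*n)) with hs | hs | hs | hs
  · exfalso
    obtain ⟨w, hw⟩ := cycleOn_walk_sub hbij.1 h1 P.val P
    have hend : g' (P - (P.val : ℕ)) = none := by rw [hPc, sub_self, hg0]
    have := hfn (w.copy hP hend)
    rw [SimpleGraph.Walk.length_copy, hw] at this
    omega
  · rw [← hP, ← hPc, hs]
  · exfalso
    obtain ⟨w, hw⟩ := cycleOn_walk_add hbij.1 h1 (2*n-1) P
    have hend : g' (P + ((2*n-1 : ℕ) : ZMod (4*n+1))) = q := by
      rw [hq]; congr 1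
      rw [← hPc, hs, ← Nat.cast_add]
      congr 1
      omega
    have := hfq (w.copy hP hend)
    rw [SimpleGraph.Walk.length_copy, hw] at this
    omega
  · exfalso
    obtain ⟨w, hw⟩ := cycleOn_walk_add hbij.1 h1 (4*n+1-P.val) P
    have hend : g' (P + ((4*n+1-P.val : ℕ) : ZMod (4*n+1))) = none := by
      have h2 : ((P.val : ℕ) : ZMod (4*n+1)) + ((4*n+1-P.val : ℕ) : ZMod (4*n+1)) = 0 := by
        rw [← Nat.cast_add, show P.val + (4*n+1-P.val) = 4*n+1 by omega, ZMod.natCast_self]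
      rw [hPc] at h2
      rw [h2, hg0]
    have := hfn (w.copy hP hend)
    rw [SimpleGraph.Walk.length_copy, hw] at this
    omega

end Special

section CSys

variable {n : ℕ}

lemma Cexists (hn : 1 ≤ n) (C : Fin n → ZMod (2*n+1) → Option (Fin (2*n)))
    (hCbij : ∀ i, Function.Bijective (C i)) (hC0 : ∀ i, C i 0 = none)
    (hHC : IsHCS (Set.range fun i => cycleOn (2*n+1) (C i))) (x : Fin (2*n)) :
    ∃ i, C i ((1:ℕ) : ZMod (2*n+1)) = some x ∨ C i ((2*n:ℕ) : ZMod (2*n+1)) = some x := by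
  haveI : NeZero (2*n+1) := ⟨by omega⟩
  obtain ⟨H, ⟨hmem, he⟩, -⟩ := hHC.2 s(none, some x) (by simp)
  obtain ⟨i, rfl⟩ := hmem
  rw [SimpleGraph.mem_edgeSet] at he
  rw [show (none : Option (Fin (2*n))) = C i 0 from (hC0 i).symm] at he
  rcases cycleOn_adj_right (hCbij i) he with h | h
  · refine ⟨i, Or.inl ?_⟩
    rw [show (0 : ZMod (2*n+1)) + 1 = ((1:ℕ) : ZMod (2*n+1)) by norm_num] at h
    exact h.symm
  · refine ⟨i, Or.inr ?_⟩
    rw [show (0 : ZMod (2*n+1)) - 1 = ((2*n:ℕ) : ZMod (2*n+1)) by rw [castm2n]; ring] at h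
    exact h.symm

lemma Cpair (hn : 1 < n) (C : Fin n → ZMod (2*n+1) → Option (Fin (2*n)))
    (hCbij : ∀ i, Function.Bijective (C i)) (hC0 : ∀ i, C i 0 = none)
    (hHC : IsHCS (Set.range fun i => cycleOn (2*n+1) (C i))) (i j : Fin n)
    (h : C i ((1:ℕ) : ZMod (2*n+1)) = C j ((1:ℕ) : ZMod (2*n+1)) ∨
         C i ((2*n:ℕ) : ZMod (2*n+1)) = C j ((2*n:ℕ) : ZMod (2*n+1))) :
    C i ((1:ℕ) : ZMod (2*n+1)) = C j ((1:ℕ) : ZMod (2*n+1)) ∧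
      C i ((2*n:ℕ) : ZMod (2*n+1)) = C j ((2*n:ℕ) : ZMod (2*n+1)) := by
  haveI : NeZero (2*n+1) := ⟨by omega⟩
  have h1ne : ((1:ℕ) : ZMod (2*n+1)) ≠ 0 := castNeZero one_ne_zero (by omega)
  have h2ne : ((2*n:ℕ) : ZMod (2*n+1)) ≠ 0 := castNeZero (by omega) (by omega)
  have hne12 : ((1:ℕ) : ZMod (2*n+1)) ≠ ((2*n:ℕ) : ZMod (2*n+1)) := fun hh => by
    have := castInjZ (m := 2*n+1) (j := 1) (k := 2*n) (by omega) (by omega) hh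
    omega
  have adj1 : ∀ k : Fin n,
      (cycleOn (2*n+1) (C k)).Adj (C k 0) (C k ((1:ℕ) : ZMod (2*n+1))) := by
    intro k
    exact cycleOn_adj_of (hCbij k).1 (fun hh => h1ne hh.symm) (Or.inl (by norm_num))
  have adj2 : ∀ k : Fin n,
      (cycleOn (2*n+1) (C k)).Adj (C k 0) (C k ((2*n:ℕ) : ZMod (2*n+1))) := by
    intro k
    exact cycleOn_adj_of (hCbij k).1 (fun hh => h2ne hh.symm)
      (Or.inr (by rw [castm2n]; ring))
  have hGeq : cycleOn (2*n+1) (C i) = cycleOn (2*n+1) (C j) := by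
    rcases h with h | h
    · obtain ⟨c, hc⟩ := bij_some (hCbij i).1 (hC0 i) h1ne
      obtain ⟨H0, -, huniq⟩ := hHC.2 s(none, C i ((1:ℕ) : ZMod (2*n+1))) (by simp only [SimpleGraph.mem_edgeSet, SimpleGraph.top_adj, hc]; simp)
      have e1 := huniq (cycleOn (2*n+1) (C i)) ⟨⟨i, rfl⟩, by
        rw [SimpleGraph.mem_edgeSet,
          show (none : Option (Fin (2*n))) = C i 0 from (hC0 i).symm]
        exact adj1 i⟩
      have e2 := huniq (cycleOn (2*n+1) (C j)) ⟨⟨j, rfl⟩, by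
        rw [SimpleGraph.mem_edgeSet,
          show (none : Option (Fin (2*n))) = C j 0 from (hC0 j).symm, h]
        exact adj1 j⟩
      exact e1.trans e2.symm
    · obtain ⟨c, hc⟩ := bij_some (hCbij i).1 (hC0 i) h2ne
      obtain ⟨H0, -, huniq⟩ := hHC.2 s(none, C i ((2*n:ℕ) : ZMod (2*n+1))) (by simp only [SimpleGraph.mem_edgeSet, SimpleGraph.top_adj, hc]; simp)
      have e1 := huniq (cycleOn (2*n+1) (C i)) ⟨⟨i, rfl⟩, by
        rw [SimpleGraph.mem_edgeSet,
          show (none : Option (Fin (2*n))) = C i 0 from (hC0 i).symm]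
        exact adj2 i⟩
      have e2 := huniq (cycleOn (2*n+1) (C j)) ⟨⟨j, rfl⟩, by
        rw [SimpleGraph.mem_edgeSet,
          show (none : Option (Fin (2*n))) = C j 0 from (hC0 j).symm, h]
        exact adj2 j⟩
      exact e1.trans e2.symm
  have key1 : C i ((1:ℕ) : ZMod (2*n+1)) = C j ((1:ℕ) : ZMod (2*n+1)) ∨
      C i ((1:ℕ) : ZMod (2*n+1)) = C j ((2*n:ℕ) : ZMod (2*n+1)) := by
    have t := adj1 i
    rw [hGeq, show C i 0 = C j 0 by rw [hC0 i, hC0 j]] at t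
    rcases cycleOn_adj_right (hCbij j) t with ht | ht
    · left
      rw [ht, show (0 : ZMod (2*n+1)) + 1 = ((1:ℕ) : ZMod (2*n+1)) by norm_num]
    · right
      rw [ht, show (0 : ZMod (2*n+1)) - 1 = ((2*n:ℕ) : ZMod (2*n+1)) by rw [castm2n]; ring]
  have key2 : C i ((2*n:ℕ) : ZMod (2*n+1)) = C j ((1:ℕ) : ZMod (2*n+1)) ∨
      C i ((2*n:ℕ) : ZMod (2*n+1)) = C j ((2*n:ℕ) : ZMod (2*n+1)) := by
    have t := adj2 i
    rw [hGeq, show C i 0 = C j 0 by rw [hC0 i, hC0 j]] at t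
    rcases cycleOn_adj_right (hCbij j) t with ht | ht
    · left
      rw [ht, show (0 : ZMod (2*n+1)) + 1 = ((1:ℕ) : ZMod (2*n+1)) by norm_num]
    · right
      rw [ht, show (0 : ZMod (2*n+1)) - 1 = ((2*n:ℕ) : ZMod (2*n+1)) by rw [castm2n]; ring]
  rcases h with h | h
  · refine ⟨h, ?_⟩
    rcases key2 with hk | hk
    · exfalso
      rw [← h] at hk
      exact hne12 ((hCbij i).1 hk).symm
    · exact hk
  · refine ⟨?_, h⟩
    rcases key1 with hk | hk
    · exact hk
    · exfalso
      rw [← h] at hk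
      exact hne12 ((hCbij i).1 hk)

end CSys

section Base

variable {n : ℕ}

lemma base_special (hn : 1 < n)
    (A B C : Fin n → ZMod (2*n+1) → Option (Fin (2*n)))
    (hAbij : ∀ i, Function.Bijective (A i))
    (hBbij : ∀ i, Function.Bijective (B i))
    (hCbij : ∀ i, Function.Bijective (C i))
    (hA0 : ∀ i, A i 0 = none) (hB0 : ∀ i, B i 0 = none) (hC0 : ∀ i, C i 0 = none)
    (hfirst : ∀ i, A i 1 = B i 1 ∧ B i 1 = C i 1)
    (hlast : ∀ i, A i ((2*n : ℕ) : ZMod (2*n+1)) = B i ((2*n : ℕ) : ZMod (2*n+1)) ∧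
      B i ((2*n : ℕ) : ZMod (2*n+1)) = C i ((2*n : ℕ) : ZMod (2*n+1))) :
    SpecialAt ((Set.range fun i : Fin n => cycleOn (4*n+1) (doubleT1 n (A i) (B i))) ∪
      (Set.range fun i : Fin n => cycleOn (4*n+1) (doubleT2 n (C i)))) (2*n-1) none := by
  haveI : NeZero (4*n+1) := ⟨by omega⟩
  haveI : NeZero (2*n+1) := ⟨by omega⟩
  have h1ne : (1 : ZMod (2*n+1)) ≠ 0 := by
    have := castNeZero (m := 2*n+1) (j := 1) one_ne_zero (by omega)
    simpa using this
  have h2nne : ((2*n:ℕ) : ZMod (2*n+1)) ≠ 0 := castNeZero (by omega) (by omega)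
  have hM1ne : (0 : ZMod (4*n+1)) ≠ ((1:ℕ) : ZMod (4*n+1)) := by
    simpa using (oneM_ne n (by omega)).symm
  have hM4ne : (0 : ZMod (4*n+1)) ≠ ((4*n:ℕ) : ZMod (4*n+1)) := by
    rw [castM41]
    intro hh
    exact oneM_ne n (by omega) (by rw [← neg_neg (1 : ZMod (4*n+1)), ← hh, neg_zero])
  have hMne : ((2*n+1:ℕ) : ZMod (4*n+1)) ≠ ((2*n:ℕ) : ZMod (4*n+1)) := by
    intro hh
    have := castInjZ (m := 4*n+1) (j := 2*n+1) (k := 2*n) (by omega) (by omega) hh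
    omega
  intro K hK
  rcases hK with ⟨i, rfl⟩ | ⟨i, rfl⟩
  · -- K = T1 i
    have hbg := d1_bij (n := n) (by omega) (hAbij i) (hBbij i) (hA0 i) (hB0 i)
    have hbh := d2_bij (n := n) (by omega) (hCbij i) (hC0 i)
    obtain ⟨c, hc⟩ := bij_some (hCbij i).1 (hC0 i) h1ne
    have hA1 : A i 1 = some c := ((hfirst i).1.trans (hfirst i).2).trans hc
    have hB1 : B i 1 = some c := (hfirst i).2.trans hc
    have hg0 : doubleT1 n (A i) (B i) 0 = none := d1_zero n (A i) (B i)
    have hg1 : doubleT1 n (A i) (B i) ((1:ℕ) : ZMod (4*n+1)) = some (c, true) := by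
      rw [d1_lo n (A i) (B i) 1 le_rfl (by omega), Nat.cast_one, hA1]; rfl
    have hg4 : doubleT1 n (A i) (B i) ((4*n:ℕ) : ZMod (4*n+1)) = some (c, false) := by
      rw [d1_hi n (A i) (B i) (4*n) (by omega) le_rfl, show 4*n+1-4*n = 1 by omega,
        Nat.cast_one, hB1]; rfl
    have hh0 : doubleT2 n (C i) 0 = none := d2_zero n (C i)
    have hh21 : doubleT2 n (C i) ((2*n+1:ℕ) : ZMod (4*n+1)) = some (c, true) := by
      rw [d2_hi n (C i) (2*n+1) le_rfl (by omega), show 2*n+1-2*n = 1 by omega,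
        Nat.cast_one, hc]
      norm_num
    have hh2n : doubleT2 n (C i) ((2*n:ℕ) : ZMod (4*n+1)) = some (c, false) := by
      rw [d2_lo n (C i) (2*n) (by omega) le_rfl, show 2*n+1-2*n = 1 by omega,
        Nat.cast_one, hc]
      simp [Nat.mul_mod_right]
    refine ⟨cycleOn (4*n+1) (doubleT2 n (C i)), Or.inr ⟨i, rfl⟩,
      some (c, true), some (c, false), ?_, ?_, ?_, ?_, ?_, ?_⟩
    · have := cycleOn_adj_of hbg.1 (i := 0) (j := ((1:ℕ) : ZMod (4*n+1))) hM1ne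
        (Or.inl (by norm_num))
      rwa [hg0, hg1] at this
    · have := cycleOn_adj_of hbg.1 (i := 0) (j := ((4*n:ℕ) : ZMod (4*n+1))) hM4ne
        (Or.inr (by rw [castM41]; ring))
      rwa [hg0, hg4] at this
    · intro r hr
      rw [← hg0] at hr
      rcases cycleOn_adj_right hbg hr with h | h
      · left
        rw [h, zero_add, ← Nat.cast_one (R := ZMod (4*n+1)), hg1]
      · right
        rw [h, zero_sub, ← castM41, hg4]
    · have := cycleOn_adj_of hbh.1 (i := ((2*n+1:ℕ) : ZMod (4*n+1)))
        (j := ((2*n:ℕ) : ZMod (4*n+1))) hMne (Or.inr (by push_cast; ring))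
      rwa [hh21, hh2n] at this
    · exact farApart_congr (cycleOn_far (n := n) (by omega) hbh (a := 0)
        (b := ((2*n+1:ℕ) : ZMod (4*n+1))) (2*n+1) (by rw [sub_zero]) (by omega) le_rfl)
        hh0 hh21
    · exact farApart_congr (cycleOn_far (n := n) (by omega) hbh (a := 0)
        (b := ((2*n:ℕ) : ZMod (4*n+1))) (2*n) (by rw [sub_zero]) le_rfl (by omega))
        hh0 hh2n
  · -- K = T2 i
    have hbg := d2_bij (n := n) (by omega) (hCbij i) (hC0 i)
    have hbh := d1_bij (n := n) (by omega) (hAbij i) (hBbij i) (hA0 i) (hB0 i)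
    obtain ⟨e, he⟩ := bij_some (hCbij i).1 (hC0 i) h2nne
    have hA2n : A i ((2*n:ℕ) : ZMod (2*n+1)) = some e :=
      ((hlast i).1.trans (hlast i).2).trans he
    have hB2n : B i ((2*n:ℕ) : ZMod (2*n+1)) = some e := (hlast i).2.trans he
    have hg0 : doubleT2 n (C i) 0 = none := d2_zero n (C i)
    have hg1 : doubleT2 n (C i) ((1:ℕ) : ZMod (4*n+1)) = some (e, true) := by
      rw [d2_lo n (C i) 1 le_rfl (by omega), show 2*n+1-1 = 2*n by omega, he]
      norm_num
    have hg4 : doubleT2 n (C i) ((4*n:ℕ) : ZMod (4*n+1)) = some (e, false) := by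
      rw [d2_hi n (C i) (4*n) (by omega) le_rfl, show 4*n-2*n = 2*n by omega, he]
      simp [Nat.mul_mod_right]
    have hh0 : doubleT1 n (A i) (B i) 0 = none := d1_zero n (A i) (B i)
    have hh2n : doubleT1 n (A i) (B i) ((2*n:ℕ) : ZMod (4*n+1)) = some (e, true) := by
      rw [d1_lo n (A i) (B i) (2*n) (by omega) le_rfl, hA2n]; rfl
    have hh21 : doubleT1 n (A i) (B i) ((2*n+1:ℕ) : ZMod (4*n+1)) = some (e, false) := by
      rw [d1_hi n (A i) (B i) (2*n+1) le_rfl (by omega),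
        show 4*n+1-(2*n+1) = 2*n by omega, hB2n]; rfl
    refine ⟨cycleOn (4*n+1) (doubleT1 n (A i) (B i)), Or.inl ⟨i, rfl⟩,
      some (e, true), some (e, false), ?_, ?_, ?_, ?_, ?_, ?_⟩
    · have := cycleOn_adj_of hbg.1 (i := 0) (j := ((1:ℕ) : ZMod (4*n+1))) hM1ne
        (Or.inl (by norm_num))
      rwa [hg0, hg1] at this
    · have := cycleOn_adj_of hbg.1 (i := 0) (j := ((4*n:ℕ) : ZMod (4*n+1))) hM4ne
        (Or.inr (by rw [castM41]; ring))
      rwa [hg0, hg4] at this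
    · intro r hr
      rw [← hg0] at hr
      rcases cycleOn_adj_right hbg hr with h | h
      · left
        rw [h, zero_add, ← Nat.cast_one (R := ZMod (4*n+1)), hg1]
      · right
        rw [h, zero_sub, ← castM41, hg4]
    · have := cycleOn_adj_of hbh.1 (i := ((2*n:ℕ) : ZMod (4*n+1)))
        (j := ((2*n+1:ℕ) : ZMod (4*n+1))) (Ne.symm hMne) (Or.inl (by push_cast; ring))
      rwa [hh2n, hh21] at this
    · exact farApart_congr (cycleOn_far (n := n) (by omega) hbh (a := 0)
        (b := ((2*n:ℕ) : ZMod (4*n+1))) (2*n) (by rw [sub_zero]) le_rfl (by omega))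
        hh0 hh2n
    · exact farApart_congr (cycleOn_far (n := n) (by omega) hbh (a := 0)
        (b := ((2*n+1:ℕ) : ZMod (4*n+1))) (2*n+1) (by rw [sub_zero]) (by omega) le_rfl)
        hh0 hh21

end Base

section Refut

variable {n : ℕ}

lemma refut_special (hn : 1 < n)
    (A B C : Fin n → ZMod (2*n+1) → Option (Fin (2*n)))
    (hAbij : ∀ i, Function.Bijective (A i))
    (hBbij : ∀ i, Function.Bijective (B i))
    (hCbij : ∀ i, Function.Bijective (C i))
    (hA0 : ∀ i, A i 0 = none) (hB0 : ∀ i, B i 0 = none) (hC0 : ∀ i, C i 0 = none)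
    (hHC : IsHCS (Set.range fun i => cycleOn (2*n+1) (C i)))
    (hfirst : ∀ i, A i 1 = B i 1 ∧ B i 1 = C i 1)
    (hlast : ∀ i, A i ((2*n : ℕ) : ZMod (2*n+1)) = B i ((2*n : ℕ) : ZMod (2*n+1)) ∧
      B i ((2*n : ℕ) : ZMod (2*n+1)) = C i ((2*n : ℕ) : ZMod (2*n+1)))
    (x : Fin (2*n)) (s : Bool) :
    ¬ SpecialAt ((Set.range fun i : Fin n => cycleOn (4*n+1) (doubleT1 n (A i) (B i))) ∪
      (Set.range fun i : Fin n => cycleOn (4*n+1) (doubleT2 n (C i)))) (2*n-1)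
      (some (x, s)) := by
  intro hsp
  haveI : NeZero (4*n+1) := ⟨by omega⟩
  haveI : NeZero (2*n+1) := ⟨by omega⟩
  have h1ne : ((1:ℕ) : ZMod (2*n+1)) ≠ 0 := castNeZero one_ne_zero (by omega)
  have h1ne' : (1 : ZMod (2*n+1)) ≠ 0 := by rwa [Nat.cast_one] at h1ne
  have h2ne : ((2:ℕ) : ZMod (2*n+1)) ≠ 0 := castNeZero (by omega) (by omega)
  have h2nne : ((2*n:ℕ) : ZMod (2*n+1)) ≠ 0 := castNeZero (by omega) (by omega)
  have h2n1ne : ((2*n-1:ℕ) : ZMod (2*n+1)) ≠ 0 := castNeZero (by omega) (by omega)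
  have hadd1 : ((1:ℕ) : ZMod (4*n+1)) + 1 = ((2:ℕ) : ZMod (4*n+1)) := by push_cast; ring
  have hsub1 : ((1:ℕ) : ZMod (4*n+1)) - 1 = 0 := by simp
  have hadd4 : ((4*n:ℕ) : ZMod (4*n+1)) + 1 = 0 := by rw [castM41]; ring
  have hsub4 : ((4*n:ℕ) : ZMod (4*n+1)) - 1 = ((4*n-1:ℕ) : ZMod (4*n+1)) := by
    rw [sub_eq_iff_eq_add, ← Nat.cast_one (R := ZMod (4*n+1)), ← Nat.cast_add]
    congr 1
    omega
  have hinj2 : ∀ i : Fin n, A i ((2:ℕ) : ZMod (2*n+1)) = A i ((2*n:ℕ) : ZMod (2*n+1)) →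
      False := by
    intro i hh
    have := castInjZ (m := 2*n+1) (j := 2) (k := 2*n) (by omega) (by omega) ((hAbij i).1 hh)
    omega
  have hinjB2 : ∀ i : Fin n, B i ((2:ℕ) : ZMod (2*n+1)) = B i ((2*n:ℕ) : ZMod (2*n+1)) →
      False := by
    intro i hh
    have := castInjZ (m := 2*n+1) (j := 2) (k := 2*n) (by omega) (by omega) ((hBbij i).1 hh)
    omega
  have hinjC1 : ∀ i : Fin n, C i ((1:ℕ) : ZMod (2*n+1)) = C i ((2*n-1:ℕ) : ZMod (2*n+1)) →
      False := by
    intro i hh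
    have := castInjZ (m := 2*n+1) (j := 1) (k := 2*n-1) (by omega) (by omega) ((hCbij i).1 hh)
    omega
  obtain ⟨i, hix⟩ := Cexists (by omega) C hCbij hC0 hHC x
  rcases hix with hx1 | hx2n
  · -- x = C i 1 ; v is adjacent to ∞ in T1 i
    have hbg := d1_bij (n := n) (by omega) (hAbij i) (hBbij i) (hA0 i) (hB0 i)
    have hg0 : doubleT1 n (A i) (B i) 0 = none := d1_zero n (A i) (B i)
    have hA1 : A i 1 = some x := by
      rw [(hfirst i).1.trans (hfirst i).2, ← Nat.cast_one (R := ZMod (2*n+1))]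
      exact hx1
    have hB1 : B i 1 = some x := by
      rw [(hfirst i).2, ← Nat.cast_one (R := ZMod (2*n+1))]
      exact hx1
    cases s with
    | true =>
      -- v = some (x, true) at position 1 of T1 i
      obtain ⟨a2, hA2⟩ := bij_some (hAbij i).1 (hA0 i) h2ne
      have hgv : doubleT1 n (A i) (B i) ((1:ℕ) : ZMod (4*n+1)) = some (x, true) := by
        rw [d1_lo n (A i) (B i) 1 le_rfl (by omega), Nat.cast_one, hA1]; rfl
      have hgq : doubleT1 n (A i) (B i) ((2:ℕ) : ZMod (4*n+1)) = some (a2, true) := by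
        rw [d1_lo n (A i) (B i) 2 (by omega) (by omega), hA2]; rfl
      obtain ⟨K', hK'm, p', q', hp', hq', hex, hadj, hfp, hfq⟩ :=
        hsp (cycleOn (4*n+1) (doubleT1 n (A i) (B i))) (Or.inl ⟨i, rfl⟩)
      have hnbr : ∀ r, (cycleOn (4*n+1) (doubleT1 n (A i) (B i))).Adj (some (x, true)) r →
          r = none ∨ r = some (a2, true) := by
        intro r hr
        rw [← hgv] at hr
        rcases cycleOn_adj_right hbg hr with h | h
        · right; rw [h, hadd1, hgq]
        · left; rw [h, hsub1, hg0]
      have hmain : K'.Adj none (some (a2, true)) ∧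
          FarApart K' (2*n-1) (some (x, true)) none ∧
          FarApart K' (2*n-1) (some (x, true)) (some (a2, true)) := by
        rcases pick_two hadj.ne (hnbr p' hp') (hnbr q' hq') with ⟨h1', h2'⟩ | ⟨h1', h2'⟩
        · rw [h1'] at hadj hfp; rw [h2'] at hadj hfq
          exact ⟨hadj, hfp, hfq⟩
        · rw [h1'] at hadj hfp; rw [h2'] at hadj hfq
          exact ⟨hadj.symm, hfq, hfp⟩
      obtain ⟨hKadj, hfn, hfq2⟩ := hmain
      rcases hK'm with ⟨j, rfl⟩ | ⟨j, rfl⟩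
      · -- K' = T1 j
        have hbg' := d1_bij (n := n) (by omega) (hAbij j) (hBbij j) (hA0 j) (hB0 j)
        have hq'1 : some (a2, true) = doubleT1 n (A j) (B j) ((1:ℕ) : ZMod (4*n+1)) := by
          rcases q_position (by omega) hbg' (d1_zero n (A j) (B j)) hKadj with h | h
          · exact h
          · exfalso
            obtain ⟨b, hb⟩ := bij_some (hBbij j).1 (hB0 j) h1ne
            rw [d1_hi n (A j) (B j) (4*n) (by omega) le_rfl,
              show 4*n+1-4*n = 1 by omega, hb] at h
            simp at h
        have hvbad := pv_bad1 hn hbg' (d1_zero n (A j) (B j)) hfn hfq2 hq'1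
        obtain ⟨b', hb'⟩ := bij_some (hBbij j).1 (hB0 j) h2nne
        rw [d1_hi n (A j) (B j) (2*n+1) le_rfl (by omega),
          show 4*n+1-(2*n+1) = 2*n by omega, hb'] at hvbad
        simp at hvbad
      · -- K' = T2 j
        have hbg' := d2_bij (n := n) (by omega) (hCbij j) (hC0 j)
        have hq'1 : some (a2, true) = doubleT2 n (C j) ((1:ℕ) : ZMod (4*n+1)) := by
          rcases q_position (by omega) hbg' (d2_zero n (C j)) hKadj with h | h
          · exact h
          · exfalso
            obtain ⟨b, hb⟩ := bij_some (hCbij j).1 (hC0 j) h2nne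
            rw [d2_hi n (C j) (4*n) (by omega) le_rfl,
              show 4*n-2*n = 2*n by omega, hb] at h
            simp [Nat.mul_mod_right] at h
        have hvbad := pv_bad1 hn hbg' (d2_zero n (C j)) hfn hfq2 hq'1
        obtain ⟨c1, hc1⟩ := bij_some (hCbij j).1 (hC0 j) h1ne
        rw [d2_hi n (C j) (2*n+1) le_rfl (by omega),
          show 2*n+1-2*n = 1 by omega, hc1] at hvbad
        norm_num at hvbad
        -- hvbad : x = c1, i.e. C j 1 = some x
        have hCj1 : C j ((1:ℕ) : ZMod (2*n+1)) = some x := by rw [hc1, hvbad]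
        have hpair := Cpair hn C hCbij hC0 hHC i j (Or.inl (hx1.trans hCj1.symm))
        -- q at position 1 of T2 j : C j 2n = some a2
        rw [d2_lo n (C j) 1 le_rfl (by omega), show 2*n+1-1 = 2*n by omega] at hq'1
        obtain ⟨c2n, hc2n⟩ := bij_some (hCbij j).1 (hC0 j) h2nne
        rw [hc2n] at hq'1
        norm_num at hq'1
        -- now A i 2 = a2 and A i 2n = C i 2n = C j 2n = some a2
        have hAi2n : A i ((2*n:ℕ) : ZMod (2*n+1)) = some a2 := by
          rw [(hlast i).1.trans (hlast i).2, hpair.2, hc2n, hq'1]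
        exact hinj2 i (hA2.trans hAi2n.symm)
    | false =>
      -- v = some (x, false) at position 4n of T1 i
      obtain ⟨b2, hB2⟩ := bij_some (hBbij i).1 (hB0 i) h2ne
      have hgv : doubleT1 n (A i) (B i) ((4*n:ℕ) : ZMod (4*n+1)) = some (x, false) := by
        rw [d1_hi n (A i) (B i) (4*n) (by omega) le_rfl, show 4*n+1-4*n = 1 by omega,
          Nat.cast_one, hB1]; rfl
      have hgq : doubleT1 n (A i) (B i) ((4*n-1:ℕ) : ZMod (4*n+1)) = some (b2, false) := by
        rw [d1_hi n (A i) (B i) (4*n-1) (by omega) (by omega),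
          show 4*n+1-(4*n-1) = 2 by omega, hB2]; rfl
      obtain ⟨K', hK'm, p', q', hp', hq', hex, hadj, hfp, hfq⟩ :=
        hsp (cycleOn (4*n+1) (doubleT1 n (A i) (B i))) (Or.inl ⟨i, rfl⟩)
      have hnbr : ∀ r, (cycleOn (4*n+1) (doubleT1 n (A i) (B i))).Adj (some (x, false)) r →
          r = none ∨ r = some (b2, false) := by
        intro r hr
        rw [← hgv] at hr
        rcases cycleOn_adj_right hbg hr with h | h
        · left; rw [h, hadd4, hg0]
        · right; rw [h, hsub4, hgq]
      have hmain : K'.Adj none (some (b2, false)) ∧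
          FarApart K' (2*n-1) (some (x, false)) none ∧
          FarApart K' (2*n-1) (some (x, false)) (some (b2, false)) := by
        rcases pick_two hadj.ne (hnbr p' hp') (hnbr q' hq') with ⟨h1', h2'⟩ | ⟨h1', h2'⟩
        · rw [h1'] at hadj hfp; rw [h2'] at hadj hfq
          exact ⟨hadj, hfp, hfq⟩
        · rw [h1'] at hadj hfp; rw [h2'] at hadj hfq
          exact ⟨hadj.symm, hfq, hfp⟩
      obtain ⟨hKadj, hfn, hfq2⟩ := hmain
      rcases hK'm with ⟨j, rfl⟩ | ⟨j, rfl⟩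
      · -- K' = T1 j
        have hbg' := d1_bij (n := n) (by omega) (hAbij j) (hBbij j) (hA0 j) (hB0 j)
        have hq'1 : some (b2, false) = doubleT1 n (A j) (B j) ((4*n:ℕ) : ZMod (4*n+1)) := by
          rcases q_position (by omega) hbg' (d1_zero n (A j) (B j)) hKadj with h | h
          · exfalso
            obtain ⟨b, hb⟩ := bij_some (hAbij j).1 (hA0 j) h1ne
            rw [d1_lo n (A j) (B j) 1 le_rfl (by omega), hb] at h
            simp at h
          · exact h
        have hvbad := pv_bad2 hn hbg' (d1_zero n (A j) (B j)) hfn hfq2 hq'1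
        obtain ⟨a', ha'⟩ := bij_some (hAbij j).1 (hA0 j) h2nne
        rw [d1_lo n (A j) (B j) (2*n) (by omega) le_rfl, ha'] at hvbad
        simp at hvbad
      · -- K' = T2 j
        have hbg' := d2_bij (n := n) (by omega) (hCbij j) (hC0 j)
        have hq'1 : some (b2, false) = doubleT2 n (C j) ((4*n:ℕ) : ZMod (4*n+1)) := by
          rcases q_position (by omega) hbg' (d2_zero n (C j)) hKadj with h | h
          · exfalso
            obtain ⟨c, hcq⟩ := bij_some (hCbij j).1 (hC0 j) h2nne
            rw [d2_lo n (C j) 1 le_rfl (by omega), show 2*n+1-1 = 2*n by omega, hcq] at h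
            norm_num at h
          · exact h
        have hvbad := pv_bad2 hn hbg' (d2_zero n (C j)) hfn hfq2 hq'1
        obtain ⟨c1, hc1⟩ := bij_some (hCbij j).1 (hC0 j) h1ne
        rw [d2_lo n (C j) (2*n) (by omega) le_rfl, show 2*n+1-2*n = 1 by omega, hc1] at hvbad
        simp [Nat.mul_mod_right] at hvbad
        -- hvbad : x = c1
        have hCj1 : C j ((1:ℕ) : ZMod (2*n+1)) = some x := by rw [hc1, hvbad]
        have hpair := Cpair hn C hCbij hC0 hHC i j (Or.inl (hx1.trans hCj1.symm))
        rw [d2_hi n (C j) (4*n) (by omega) le_rfl, show 4*n-2*n = 2*n by omega] at hq'1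
        obtain ⟨c2n, hc2n⟩ := bij_some (hCbij j).1 (hC0 j) h2nne
        rw [hc2n] at hq'1
        simp [Nat.mul_mod_right] at hq'1
        have hBi2n : B i ((2*n:ℕ) : ZMod (2*n+1)) = some b2 := by
          rw [(hlast i).2, hpair.2, hc2n, hq'1]
        exact hinjB2 i (hB2.trans hBi2n.symm)
  · -- x = C i 2n ; v is adjacent to ∞ in T2 i
    have hbg := d2_bij (n := n) (by omega) (hCbij i) (hC0 i)
    have hg0 : doubleT2 n (C i) 0 = none := d2_zero n (C i)
    obtain ⟨c2, hc2⟩ := bij_some (hCbij i).1 (hC0 i) h2n1ne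
    cases s with
    | true =>
      -- v = some (x, true) at position 1 of T2 i
      have hgv : doubleT2 n (C i) ((1:ℕ) : ZMod (4*n+1)) = some (x, true) := by
        rw [d2_lo n (C i) 1 le_rfl (by omega), show 2*n+1-1 = 2*n by omega, hx2n]
        norm_num
      have hgq : doubleT2 n (C i) ((2:ℕ) : ZMod (4*n+1)) = some (c2, false) := by
        rw [d2_lo n (C i) 2 (by omega) (by omega), show 2*n+1-2 = 2*n-1 by omega, hc2]
        norm_num
      obtain ⟨K', hK'm, p', q', hp', hq', hex, hadj, hfp, hfq⟩ :=
        hsp (cycleOn (4*n+1) (doubleT2 n (C i))) (Or.inr ⟨i, rfl⟩)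
      have hnbr : ∀ r, (cycleOn (4*n+1) (doubleT2 n (C i))).Adj (some (x, true)) r →
          r = none ∨ r = some (c2, false) := by
        intro r hr
        rw [← hgv] at hr
        rcases cycleOn_adj_right hbg hr with h | h
        · right; rw [h, hadd1, hgq]
        · left; rw [h, hsub1, hg0]
      have hmain : K'.Adj none (some (c2, false)) ∧
          FarApart K' (2*n-1) (some (x, true)) none ∧
          FarApart K' (2*n-1) (some (x, true)) (some (c2, false)) := by
        rcases pick_two hadj.ne (hnbr p' hp') (hnbr q' hq') with ⟨h1', h2'⟩ | ⟨h1', h2'⟩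
        · rw [h1'] at hadj hfp; rw [h2'] at hadj hfq
          exact ⟨hadj, hfp, hfq⟩
        · rw [h1'] at hadj hfp; rw [h2'] at hadj hfq
          exact ⟨hadj.symm, hfq, hfp⟩
      obtain ⟨hKadj, hfn, hfq2⟩ := hmain
      rcases hK'm with ⟨j, rfl⟩ | ⟨j, rfl⟩
      · -- K' = T1 j
        have hbg' := d1_bij (n := n) (by omega) (hAbij j) (hBbij j) (hA0 j) (hB0 j)
        have hq'1 : some (c2, false) = doubleT1 n (A j) (B j) ((4*n:ℕ) : ZMod (4*n+1)) := by
          rcases q_position (by omega) hbg' (d1_zero n (A j) (B j)) hKadj with h | h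
          · exfalso
            obtain ⟨b, hb⟩ := bij_some (hAbij j).1 (hA0 j) h1ne
            rw [d1_lo n (A j) (B j) 1 le_rfl (by omega), hb] at h
            simp at h
          · exact h
        have hvbad := pv_bad2 hn hbg' (d1_zero n (A j) (B j)) hfn hfq2 hq'1
        obtain ⟨a', ha'⟩ := bij_some (hAbij j).1 (hA0 j) h2nne
        rw [d1_lo n (A j) (B j) (2*n) (by omega) le_rfl, ha'] at hvbad
        simp at hvbad
        -- hvbad : x = a' ; A j 2n = some x
        have hCj2n : C j ((2*n:ℕ) : ZMod (2*n+1)) = some x := by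
          rw [← ((hlast j).1.trans (hlast j).2), ha', hvbad]
        have hpair := Cpair hn C hCbij hC0 hHC i j (Or.inr (hx2n.trans hCj2n.symm))
        rw [d1_hi n (A j) (B j) (4*n) (by omega) le_rfl, show 4*n+1-4*n = 1 by omega] at hq'1
        obtain ⟨b1, hb1⟩ := bij_some (hBbij j).1 (hB0 j) h1ne
        rw [hb1] at hq'1
        simp at hq'1
        -- B j 1 = some c2
        have hBj1 : B j ((1:ℕ) : ZMod (2*n+1)) = C j ((1:ℕ) : ZMod (2*n+1)) := by
          rw [Nat.cast_one]; exact (hfirst j).2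
        have hCi1 : C i ((1:ℕ) : ZMod (2*n+1)) = some c2 := by
          rw [hpair.1, ← hBj1, hb1, hq'1]
        exact hinjC1 i (hCi1.trans hc2.symm)
      · -- K' = T2 j
        have hbg' := d2_bij (n := n) (by omega) (hCbij j) (hC0 j)
        have hq'1 : some (c2, false) = doubleT2 n (C j) ((4*n:ℕ) : ZMod (4*n+1)) := by
          rcases q_position (by omega) hbg' (d2_zero n (C j)) hKadj with h | h
          · exfalso
            obtain ⟨c, hcq⟩ := bij_some (hCbij j).1 (hC0 j) h2nne
            rw [d2_lo n (C j) 1 le_rfl (by omega), show 2*n+1-1 = 2*n by omega, hcq] at h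
            norm_num at h
          · exact h
        have hvbad := pv_bad2 hn hbg' (d2_zero n (C j)) hfn hfq2 hq'1
        obtain ⟨c1, hc1⟩ := bij_some (hCbij j).1 (hC0 j) h1ne
        rw [d2_lo n (C j) (2*n) (by omega) le_rfl, show 2*n+1-2*n = 1 by omega, hc1] at hvbad
        simp [Nat.mul_mod_right] at hvbad
    | false =>
      -- v = some (x, false) at position 4n of T2 i
      have hgv : doubleT2 n (C i) ((4*n:ℕ) : ZMod (4*n+1)) = some (x, false) := by
        rw [d2_hi n (C i) (4*n) (by omega) le_rfl, show 4*n-2*n = 2*n by omega, hx2n]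
        simp [Nat.mul_mod_right]
      have hgq : doubleT2 n (C i) ((4*n-1:ℕ) : ZMod (4*n+1)) = some (c2, true) := by
        rw [d2_hi n (C i) (4*n-1) (by omega) (by omega), show 4*n-1-2*n = 2*n-1 by omega, hc2,
          show (2*n-1) % 2 = 1 by omega]
        norm_num
      obtain ⟨K', hK'm, p', q', hp', hq', hex, hadj, hfp, hfq⟩ :=
        hsp (cycleOn (4*n+1) (doubleT2 n (C i))) (Or.inr ⟨i, rfl⟩)
      have hnbr : ∀ r, (cycleOn (4*n+1) (doubleT2 n (C i))).Adj (some (x, false)) r →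
          r = none ∨ r = some (c2, true) := by
        intro r hr
        rw [← hgv] at hr
        rcases cycleOn_adj_right hbg hr with h | h
        · left; rw [h, hadd4, hg0]
        · right; rw [h, hsub4, hgq]
      have hmain : K'.Adj none (some (c2, true)) ∧
          FarApart K' (2*n-1) (some (x, false)) none ∧
          FarApart K' (2*n-1) (some (x, false)) (some (c2, true)) := by
        rcases pick_two hadj.ne (hnbr p' hp') (hnbr q' hq') with ⟨h1', h2'⟩ | ⟨h1', h2'⟩
        · rw [h1'] at hadj hfp; rw [h2'] at hadj hfq
          exact ⟨hadj, hfp, hfq⟩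
        · rw [h1'] at hadj hfp; rw [h2'] at hadj hfq
          exact ⟨hadj.symm, hfq, hfp⟩
      obtain ⟨hKadj, hfn, hfq2⟩ := hmain
      rcases hK'm with ⟨j, rfl⟩ | ⟨j, rfl⟩
      · -- K' = T1 j
        have hbg' := d1_bij (n := n) (by omega) (hAbij j) (hBbij j) (hA0 j) (hB0 j)
        have hq'1 : some (c2, true) = doubleT1 n (A j) (B j) ((1:ℕ) : ZMod (4*n+1)) := by
          rcases q_position (by omega) hbg' (d1_zero n (A j) (B j)) hKadj with h | h
          · exact h
          · exfalso
            obtain ⟨b, hb⟩ := bij_some (hBbij j).1 (hB0 j) h1ne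
            rw [d1_hi n (A j) (B j) (4*n) (by omega) le_rfl,
              show 4*n+1-4*n = 1 by omega, hb] at h
            simp at h
        have hvbad := pv_bad1 hn hbg' (d1_zero n (A j) (B j)) hfn hfq2 hq'1
        obtain ⟨b', hb'⟩ := bij_some (hBbij j).1 (hB0 j) h2nne
        rw [d1_hi n (A j) (B j) (2*n+1) le_rfl (by omega),
          show 4*n+1-(2*n+1) = 2*n by omega, hb'] at hvbad
        simp at hvbad
        -- B j 2n = some x
        have hCj2n : C j ((2*n:ℕ) : ZMod (2*n+1)) = some x := by
          rw [← (hlast j).2, hb', hvbad]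
        have hpair := Cpair hn C hCbij hC0 hHC i j (Or.inr (hx2n.trans hCj2n.symm))
        rw [d1_lo n (A j) (B j) 1 le_rfl (by omega)] at hq'1
        obtain ⟨a1, ha1⟩ := bij_some (hAbij j).1 (hA0 j) h1ne
        rw [ha1] at hq'1
        simp at hq'1
        -- A j 1 = some c2
        have hAj1 : A j ((1:ℕ) : ZMod (2*n+1)) = C j ((1:ℕ) : ZMod (2*n+1)) := by
          rw [Nat.cast_one]; exact (hfirst j).1.trans (hfirst j).2
        have hCi1 : C i ((1:ℕ) : ZMod (2*n+1)) = some c2 := by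
          rw [hpair.1, ← hAj1, ha1, hq'1]
        exact hinjC1 i (hCi1.trans hc2.symm)
      · -- K' = T2 j
        have hbg' := d2_bij (n := n) (by omega) (hCbij j) (hC0 j)
        have hq'1 : some (c2, true) = doubleT2 n (C j) ((1:ℕ) : ZMod (4*n+1)) := by
          rcases q_position (by omega) hbg' (d2_zero n (C j)) hKadj with h | h
          · exact h
          · exfalso
            obtain ⟨c, hcq⟩ := bij_some (hCbij j).1 (hC0 j) h2nne
            rw [d2_hi n (C j) (4*n) (by omega) le_rfl,
              show 4*n-2*n = 2*n by omega, hcq] at h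
            simp [Nat.mul_mod_right] at h
        have hvbad := pv_bad1 hn hbg' (d2_zero n (C j)) hfn hfq2 hq'1
        obtain ⟨c1, hc1⟩ := bij_some (hCbij j).1 (hC0 j) h1ne
        rw [d2_hi n (C j) (2*n+1) le_rfl (by omega),
          show 2*n+1-2*n = 1 by omega, hc1] at hvbad
        norm_num at hvbad

end Refut

section Transport

lemma smul_adj (σ : Equiv.Perm W) (H : SimpleGraph W) {a b : W} :
    (σ • H).Adj a b ↔ ∃ u v, H.Adj u v ∧ σ u = a ∧ σ v = b := by
  show (H.map σ.toEmbedding).Adj a b ↔ _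
  exact SimpleGraph.map_adj σ.toEmbedding H a b

lemma smul_adj_of (σ : Equiv.Perm W) (H : SimpleGraph W) {a b : W} (h : H.Adj a b) :
    (σ • H).Adj (σ a) (σ b) := (smul_adj σ H).2 ⟨a, b, h, rfl, rfl⟩

def smulHomBack (σ : Equiv.Perm W) (H : SimpleGraph W) : (σ • H) →g H where
  toFun := σ.symm
  map_rel' := by
    intro a b hab
    obtain ⟨u, v, h, hu, hv⟩ := (smul_adj σ H).1 hab
    rwa [← hu, ← hv, Equiv.symm_apply_apply, Equiv.symm_apply_apply]

lemma farApart_smul (σ : Equiv.Perm W) (H : SimpleGraph W) {L : ℕ} {a b : W}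
    (h : FarApart H L a b) : FarApart (σ • H) L (σ a) (σ b) := by
  intro w
  have := h ((w.map (smulHomBack σ H)).copy (σ.symm_apply_apply a) (σ.symm_apply_apply b))
  exact this.trans_eq ((SimpleGraph.Walk.length_copy _ _ _).trans (SimpleGraph.Walk.length_map _ _))

lemma specialAt_smul (σ : Equiv.Perm W) (𝓗 : Set (SimpleGraph W)) (L : ℕ) (u : W)
    (hσ : σ • 𝓗 = 𝓗) (h : SpecialAt 𝓗 L u) : SpecialAt 𝓗 L (σ u) := by
  intro K hK
  have hK' : K ∈ σ • 𝓗 := hσ.symm ▸ hK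
  obtain ⟨H, hH, rfl⟩ := hK'
  obtain ⟨K'', hK'', p, q, hp, hq, hex, hadj, hfp, hfq⟩ := h H hH
  refine ⟨σ • K'', ?_, σ p, σ q, smul_adj_of σ H hp, smul_adj_of σ H hq, ?_,
    smul_adj_of σ K'' hadj, farApart_smul σ K'' hfp, farApart_smul σ K'' hfq⟩
  · rw [← hσ]; exact Set.smul_mem_smul_set hK''
  · intro r hr
    obtain ⟨u0, v0, h0, hu0, hv0⟩ := (smul_adj σ H).1 hr
    have : u0 = u := σ.injective hu0
    subst this
    rcases hex _ h0 with h' | h'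
    · exact Or.inl (by rw [← hv0, h'])
    · exact Or.inr (by rw [← hv0, h'])

end Transport

end DblAux

/-- for `n > 1`, every automorphism of an HCS obtained by the doubling
construction fixes the vertex `∞` (here `none`). -/
theorem doubling_aut_fixes_infty (n : ℕ) (hn : 1 < n)
    (A B C : Fin n → ZMod (2*n+1) → Option (Fin (2*n)))
    (hAbij : ∀ i, Function.Bijective (A i))
    (hBbij : ∀ i, Function.Bijective (B i))
    (hCbij : ∀ i, Function.Bijective (C i))
    (hA0 : ∀ i, A i 0 = none) (hB0 : ∀ i, B i 0 = none) (hC0 : ∀ i, C i 0 = none)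
    (hHA : IsHCS (Set.range fun i => cycleOn (2*n+1) (A i)))
    (hHB : IsHCS (Set.range fun i => cycleOn (2*n+1) (B i)))
    (hHC : IsHCS (Set.range fun i => cycleOn (2*n+1) (C i)))
    (hfirst : ∀ i, A i 1 = B i 1 ∧ B i 1 = C i 1)
    (hlast : ∀ i, A i ((2*n : ℕ) : ZMod (2*n+1)) = B i ((2*n : ℕ) : ZMod (2*n+1)) ∧
      B i ((2*n : ℕ) : ZMod (2*n+1)) = C i ((2*n : ℕ) : ZMod (2*n+1))) :
    ∀ σ : Equiv.Perm (Option (Fin (2*n) × Bool)),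
      σ ∈ autHCS ((Set.range fun i : Fin n => cycleOn (4*n+1) (doubleT1 n (A i) (B i))) ∪
      (Set.range fun i : Fin n => cycleOn (4*n+1) (doubleT2 n (C i)))) → σ none = none := by
  intro σ hσ
  have hstab := MulAction.mem_stabilizer_iff.mp hσ
  have hbase := DblAux.base_special hn A B C hAbij hBbij hCbij hA0 hB0 hC0 hfirst hlast
  have htrans := DblAux.specialAt_smul σ _ _ none hstab hbase
  cases hσv : σ none with
  | none => rfl
  | some y =>
    obtain ⟨x, s⟩ := y
    rw [hσv] at htrans
    exact absurd htrans
      (DblAux.refut_special hn A B C hAbij hBbij hCbij hA0 hB0 hC0 hHC hfirst hlast x s)
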